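/- Let n and k be positive integers with 1 ≤ k < n, let S_k be a subset of T_k, and let p_k = Σ_{t ∈ S_k} P_bst(t). If X_{n,k} denotes the number of nodes v of a random binary search tree with n leaves whose fringe subtree t(v) belongs to S_k, then E(X_{n,k}) = 2·p_k·n/(k·(k+1)). -/

import Mathlib

open Filter Finset
open scoped Classical

/-- Ordered binary trees: every node has exactly two or no children. -/
inductive BT : Type
  | leaf : BT
  | node : BT → BT → BT
deriving DecidableEq

namespace BT

/-- The size of a binary tree: its number of leaves. -/
def size : BT → ℕ
  | leaf => 1
  | node l r => size l + size r

/-- The multiset of all fringe subtrees of a tree (one for every node). -/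
def fringe : BT → Multiset BT
  | leaf => {leaf}
  | node l r => node l r ::ₘ (fringe l + fringe r)

/-- The finset of all ordered binary trees with `n` leaves. -/
def treesOfSize : ℕ → Finset BT
  | 0 => ∅
  | 1 => {leaf}
  | n + 2 =>
    (Finset.range (n + 1)).attach.biUnion fun k =>
      ((treesOfSize (k.1 + 1)) ×ˢ (treesOfSize (n + 1 - k.1))).image fun p => node p.1 p.2
  decreasing_by
    · have := Finset.mem_range.mp k.2; omega
    · omega

/-- Boolean test whether two ordered binary trees are isomorphic as unordered trees. -/
def isoB : BT → BT → Bool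
  | leaf, leaf => true
  | leaf, node _ _ => false
  | node _ _, leaf => false
  | node l1 r1, node l2 r2 => (isoB l1 l2 && isoB r1 r2) || (isoB l1 r2 && isoB r1 l2)

/-- An injective encoding of ordered binary trees into the natural numbers. -/
def encode : BT → ℕ
  | leaf => 0
  | node l r => Nat.pair (encode l) (encode r) + 1

/-- The canonical representative of the isomorphism class of a binary tree:
two trees are isomorphic (equal as unordered trees) iff their canonical forms agree. -/
def canon : BT → BT
  | leaf => leaf
  | node l r =>
    let l' := canon l
    let r' := canon r
    if encode l' ≤ encode r' then node l' r' else node r' l'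

/-- Number of isomorphism classes of unordered binary trees represented among
the fringe subtrees of `t`. -/
def isoClasses (t : BT) : ℕ := ((fringe t).toFinset.image canon).card

/-- Number of distinct ordered binary trees occurring among the fringe subtrees of `t`. -/
def numDistinct (t : BT) : ℕ := (fringe t).toFinset.card

/-- The probability of a tree under the binary search tree model. -/
noncomputable def pbst (t : BT) : ℝ :=
  ((fringe t).map fun s => if 1 < size s then (1 : ℝ) / ((size s : ℝ) - 1) else 1).prod

/-- Expectation of `f` under the uniform distribution on trees with `n` leaves. -/
noncomputable def unifE (n : ℕ) (f : BT → ℝ) : ℝ :=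
  (∑ t ∈ treesOfSize n, f t) / (treesOfSize n).card

/-- Probability of an event under the uniform distribution on trees with `n` leaves. -/
noncomputable def unifP (n : ℕ) (p : BT → Prop) : ℝ :=
  ((treesOfSize n).filter p).card / (treesOfSize n).card

/-- Expectation of `f` under the binary search tree distribution on trees with `n` leaves. -/
noncomputable def bstE (n : ℕ) (f : BT → ℝ) : ℝ :=
  ∑ t ∈ treesOfSize n, pbst t * f t

/-- Probability of an event under the binary search tree distribution on trees with `n` leaves. -/
noncomputable def bstP (n : ℕ) (p : BT → Prop) : ℝ :=
  ∑ t ∈ (treesOfSize n).filter p, pbst t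

lemma size_pos : ∀ t : BT, 0 < t.size
  | leaf => one_pos
  | node l r => by simp only [size]; exact Nat.add_pos_left (size_pos l) _

lemma size_eq_one {t : BT} (h : t.size = 1) : t = leaf := by
  cases t with
  | leaf => rfl
  | node l r =>
    have hl := size_pos l; have hr := size_pos r
    simp only [size] at h; omega

lemma mem_treesOfSize : ∀ (n : ℕ) (t : BT), t ∈ treesOfSize n ↔ size t = n := by
  intro n
  induction n using Nat.strong_induction_on with
  | _ n ih =>
    match n with
    | 0 => intro t; simp only [treesOfSize, Finset.notMem_empty, false_iff]
           exact (size_pos t).ne'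
    | 1 => intro t
           simp only [treesOfSize, Finset.mem_singleton]
           constructor
           · rintro rfl; rfl
           · exact size_eq_one
    | m + 2 =>
      intro t
      rw [treesOfSize]
      simp only [Finset.mem_biUnion, Finset.mem_attach, Finset.mem_image,
        Finset.mem_product, true_and, Subtype.exists, Finset.mem_range]
      constructor
      · rintro ⟨j, hj, ⟨l, r⟩, ⟨hl, hr⟩, rfl⟩
        dsimp only at hl hr ⊢
        rw [ih _ (by omega)] at hl
        rw [ih _ (by omega)] at hr
        simp only [size]; omega
      · intro ht
        cases t with
        | leaf => simp [size] at ht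
        | node l r =>
          have hl := size_pos l; have hr := size_pos r
          simp only [size] at ht
          refine ⟨size l - 1, by omega, ⟨l, r⟩, ⟨?_, ?_⟩, rfl⟩
          · dsimp only; rw [ih _ (by omega)]; omega
          · dsimp only; rw [ih _ (by omega)]; omega

lemma pbst_leaf : pbst leaf = 1 := by
  simp [pbst, fringe, size]

lemma pbst_node (l r : BT) :
    pbst (node l r) = 1 / ((size l : ℝ) + (size r : ℝ) - 1) * (pbst l * pbst r) := by
  have hl := size_pos l; have hr := size_pos r
  have h1 : 1 < size (node l r) := by simp only [size]; omega
  simp only [pbst, fringe, Multiset.map_cons, Multiset.prod_cons, Multiset.map_add,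
    Multiset.prod_add, if_pos h1]
  have : ((size (node l r) : ℝ)) = (size l : ℝ) + (size r : ℝ) := by
    simp [size]
  rw [this]

lemma sum_treesOfSize (m : ℕ) (g : BT → ℝ) :
    ∑ t ∈ treesOfSize (m + 2), g t =
      ∑ j ∈ Finset.range (m + 1), ∑ l ∈ treesOfSize (j + 1),
        ∑ r ∈ treesOfSize (m + 1 - j), g (node l r) := by
  rw [treesOfSize]
  rw [Finset.sum_biUnion]
  · rw [← Finset.sum_attach (Finset.range (m + 1)) (fun j => ∑ l ∈ treesOfSize (j + 1),
      ∑ r ∈ treesOfSize (m + 1 - j), g (node l r))]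
    refine Finset.sum_congr rfl fun j _ => ?_
    rw [Finset.sum_image]
    · rw [Finset.sum_product]
    · rintro ⟨a, b⟩ _ ⟨c, d⟩ _ h
      simpa using h
  · rintro ⟨a, ha⟩ - ⟨b, hb⟩ - hab
    simp only [Finset.disjoint_left]
    rintro t ht ht'
    simp only [Finset.mem_image, Finset.mem_product] at ht ht'
    obtain ⟨⟨l, r⟩, ⟨hl, -⟩, rfl⟩ := ht
    obtain ⟨⟨l', r'⟩, ⟨hl', -⟩, h⟩ := ht'
    dsimp only at hl hl' h
    injection h with h1 h2
    subst h1
    rw [mem_treesOfSize] at hl hl'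
    exact hab (by simp [Subtype.ext_iff]; omega)

lemma sum_pbst : ∀ n : ℕ, 0 < n → ∑ t ∈ treesOfSize n, pbst t = 1 := by
  intro n
  induction n using Nat.strong_induction_on with
  | _ n ih =>
    match n with
    | 0 => omega
    | 1 => intro _; simp [treesOfSize, pbst_leaf]
    | m + 2 =>
      intro _
      rw [sum_treesOfSize]
      have key : ∀ j ∈ Finset.range (m + 1), (∑ l ∈ treesOfSize (j + 1),
          ∑ r ∈ treesOfSize (m + 1 - j), pbst (node l r)) = 1 / ((m : ℝ) + 1) := by
        intro j hj
        rw [Finset.mem_range] at hj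
        have e : ∀ l ∈ treesOfSize (j+1), ∀ r ∈ treesOfSize (m+1-j),
            pbst (node l r) = 1 / ((m : ℝ) + 1) * (pbst l * pbst r) := by
          intro l hl r hr
          rw [mem_treesOfSize] at hl hr
          rw [pbst_node, hl, hr]
          congr 2
          push_cast [Nat.cast_sub (by omega : j ≤ m + 1)]
          ring
        calc ∑ l ∈ treesOfSize (j + 1), ∑ r ∈ treesOfSize (m + 1 - j), pbst (node l r)
            = ∑ l ∈ treesOfSize (j + 1), ∑ r ∈ treesOfSize (m + 1 - j),
                1 / ((m : ℝ) + 1) * (pbst l * pbst r) := by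
              exact Finset.sum_congr rfl fun l hl => Finset.sum_congr rfl fun r hr => e l hl r hr
          _ = 1 / ((m : ℝ) + 1) * ((∑ l ∈ treesOfSize (j + 1), pbst l) *
                (∑ r ∈ treesOfSize (m + 1 - j), pbst r)) := by
              rw [Finset.sum_mul_sum]
              rw [Finset.mul_sum]
              exact Finset.sum_congr rfl fun l _ => by rw [Finset.mul_sum]
          _ = 1 / ((m : ℝ) + 1) := by
              rw [ih (j+1) (by omega) (by omega), ih (m+1-j) (by omega) (by omega)]
              ring
      rw [Finset.sum_congr rfl key]
      simp only [Finset.sum_const, Finset.card_range, nsmul_eq_mul]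
      push_cast
      field_simp

lemma size_le_of_mem_fringe : ∀ t : BT, ∀ s ∈ fringe t, size s ≤ size t := by
  intro t
  induction t with
  | leaf => intro s hs; simp only [fringe, Multiset.mem_singleton] at hs; subst hs; rfl
  | node l r ihl ihr =>
    intro s hs
    simp only [fringe, Multiset.mem_cons, Multiset.mem_add] at hs
    have hl := size_pos l; have hr := size_pos r
    rcases hs with rfl | h | h
    · rfl
    · have := ihl s h; simp only [size]; omega
    · have := ihr s h; simp only [size]; omega

lemma countP_small (S : Finset BT) (k : ℕ) (hS : ∀ s ∈ S, size s = k) {t : BT}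
    (ht : size t < k) : Multiset.countP (· ∈ S) (fringe t) = 0 := by
  rw [Multiset.countP_eq_zero]
  intro s hs hsS
  have h1 := size_le_of_mem_fringe t s hs
  have h2 := hS s hsS
  omega

lemma countP_indicator (S : Finset BT) (k : ℕ) (hS : ∀ s ∈ S, size s = k) {t : BT}
    (ht : size t = k) :
    Multiset.countP (· ∈ S) (fringe t) = if t ∈ S then 1 else 0 := by
  cases t with
  | leaf =>
    show Multiset.countP (· ∈ S) (leaf ::ₘ 0) = _
    rw [Multiset.countP_cons, Multiset.countP_zero]
    simp
  | node l r =>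
    have hl := size_pos l; have hr := size_pos r
    have hst : size (node l r) = size l + size r := rfl
    simp only [fringe, Multiset.countP_cons, Multiset.countP_add]
    rw [countP_small S k hS (by omega), countP_small S k hS (by omega)]
    simp

lemma countP_node (S : Finset BT) (l r : BT) :
    Multiset.countP (· ∈ S) (fringe (node l r)) =
      Multiset.countP (· ∈ S) (fringe l) + Multiset.countP (· ∈ S) (fringe r)
      + (if node l r ∈ S then 1 else 0) := by
  simp only [fringe, Multiset.countP_cons, Multiset.countP_add]

/-- The expected number of fringe subtrees in `S`. -/
noncomputable def bstCount (S : Finset BT) (n : ℕ) : ℝ :=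
  bstE n (fun t => (Multiset.countP (· ∈ S) (fringe t) : ℝ))

lemma bstCount_small (S : Finset BT) (k : ℕ) (hS : ∀ s ∈ S, size s = k) {n : ℕ}
    (hn : n < k) : bstCount S n = 0 := by
  unfold bstCount bstE
  refine Finset.sum_eq_zero fun t ht => ?_
  rw [mem_treesOfSize] at ht
  dsimp only
  rw [countP_small S k hS (by omega)]
  simp

lemma bstCount_base (S : Finset BT) (k : ℕ) (hS : S ⊆ treesOfSize k) :
    bstCount S k = ∑ t ∈ S, pbst t := by
  have hS' : ∀ s ∈ S, size s = k := fun s hs => (mem_treesOfSize k s).mp (hS hs)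
  unfold bstCount bstE
  have : ∀ t ∈ treesOfSize k, pbst t *
      (Multiset.countP (· ∈ S) (fringe t) : ℝ) = if t ∈ S then pbst t else 0 := by
    intro t ht
    rw [mem_treesOfSize] at ht
    rw [countP_indicator S k hS' ht]
    split <;> simp
  rw [Finset.sum_congr rfl this, Finset.sum_ite_mem,
    Finset.inter_eq_right.mpr hS]

lemma bstCount_rec (S : Finset BT) (k : ℕ) (hS : ∀ s ∈ S, size s = k) (m : ℕ)
    (hk : k < m + 2) :
    bstCount S (m + 2) = 1 / ((m : ℝ) + 1) *
      ∑ j ∈ Finset.range (m + 1), (bstCount S (j + 1) + bstCount S (m + 1 - j)) := by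
  unfold bstCount bstE
  rw [sum_treesOfSize]
  rw [Finset.mul_sum]
  refine Finset.sum_congr rfl fun j hj => ?_
  rw [Finset.mem_range] at hj
  calc ∑ l ∈ treesOfSize (j + 1), ∑ r ∈ treesOfSize (m + 1 - j),
        pbst (node l r) * (Multiset.countP (· ∈ S) (fringe (node l r)) : ℝ)
      = ∑ l ∈ treesOfSize (j + 1), ∑ r ∈ treesOfSize (m + 1 - j),
        (1 / ((m : ℝ) + 1)) * ((pbst l * (Multiset.countP (· ∈ S) (fringe l) : ℝ)) * pbst r
          + pbst l * (pbst r * (Multiset.countP (· ∈ S) (fringe r) : ℝ))) := by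
        refine Finset.sum_congr rfl fun l hl => Finset.sum_congr rfl fun r hr => ?_
        rw [mem_treesOfSize] at hl hr
        have hnode : node l r ∉ S := by
          intro h
          have := hS _ h
          have : size (node l r) = size l + size r := rfl
          omega
        rw [pbst_node, countP_node, if_neg hnode, hl, hr]
        have : ((j + 1 : ℕ) : ℝ) + ((m + 1 - j : ℕ) : ℝ) - 1 = (m : ℝ) + 1 := by
          push_cast [Nat.cast_sub (by omega : j ≤ m + 1)]; ring
        rw [this]
        push_cast
        ring
    _ = (1 / ((m : ℝ) + 1)) * ((∑ l ∈ treesOfSize (j + 1),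
          pbst l * (Multiset.countP (· ∈ S) (fringe l) : ℝ)) *
          (∑ r ∈ treesOfSize (m + 1 - j), pbst r)
        + (∑ l ∈ treesOfSize (j + 1), pbst l) * (∑ r ∈ treesOfSize (m + 1 - j),
          pbst r * (Multiset.countP (· ∈ S) (fringe r) : ℝ))) := by
        rw [Finset.sum_mul_sum, Finset.sum_mul_sum, ← Finset.sum_add_distrib,
          Finset.mul_sum]
        refine Finset.sum_congr rfl fun l hl => ?_
        rw [← Finset.sum_add_distrib, Finset.mul_sum]
    _ = 1 / ((m : ℝ) + 1) * ((∑ t ∈ treesOfSize (j + 1),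
          pbst t * (Multiset.countP (· ∈ S) (fringe t) : ℝ))
        + (∑ t ∈ treesOfSize (m + 1 - j),
          pbst t * (Multiset.countP (· ∈ S) (fringe t) : ℝ))) := by
        rw [sum_pbst (j + 1) (by omega), sum_pbst (m + 1 - j) (by omega)]
        ring

lemma gauss (n : ℕ) : ∑ i ∈ Finset.range n, (i : ℝ) = (n : ℝ) * ((n : ℝ) - 1) / 2 := by
  induction n with
  | zero => simp
  | succ n ih => rw [Finset.sum_range_succ, ih]; push_cast; ring

lemma bstCount_formula (S : Finset BT) (k : ℕ) (hk : 0 < k) (hS : S ⊆ treesOfSize k) :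
    ∀ n : ℕ, k < n → bstCount S n =
      2 * (∑ t ∈ S, pbst t) * (n : ℝ) / ((k : ℝ) * ((k : ℝ) + 1)) := by
  have hS' : ∀ s ∈ S, size s = k := fun s hs => (mem_treesOfSize k s).mp (hS hs)
  set p := ∑ t ∈ S, pbst t with hp
  set c : ℝ := 2 * p / ((k : ℝ) * ((k : ℝ) + 1)) with hc
  have hkR : (k : ℝ) ≠ 0 := Nat.cast_ne_zero.mpr hk.ne'
  have hk1R : (k : ℝ) + 1 ≠ 0 := by positivity
  intro n
  induction n using Nat.strong_induction_on with
  | _ n ih =>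
    intro hn
    obtain ⟨m, rfl⟩ : ∃ m, n = m + 2 := ⟨n - 2, by omega⟩
    set g : ℕ → ℝ := fun j => if j = k then p else if k < j then c * j else 0 with hg
    have hg0 : ∀ j, j < k → g j = 0 := by
      intro j hj; simp only [hg]; rw [if_neg (by omega), if_neg (by omega)]
    have hpt : ∀ j ∈ Finset.range (m + 1), bstCount S (j + 1) = g (j + 1) := by
      intro j hj
      rw [Finset.mem_range] at hj
      rcases lt_trichotomy (j + 1) k with h | h | h
      · rw [bstCount_small S k hS' h, hg0 _ h]
      · rw [h, bstCount_base S k hS]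
        simp only [hg, if_pos rfl, hp]
      · rw [ih (j + 1) (by omega) h]
        simp only [hg]
        rw [if_neg (by omega), if_pos h, hc]
        ring
    rw [bstCount_rec S k hS' m hn, Finset.sum_add_distrib]
    have refl1 : ∑ j ∈ Finset.range (m + 1), bstCount S (m + 1 - j)
        = ∑ j ∈ Finset.range (m + 1), bstCount S (j + 1) := by
      rw [← Finset.sum_range_reflect (fun j => bstCount S (j + 1)) (m + 1)]
      refine Finset.sum_congr rfl fun j hj => ?_
      rw [Finset.mem_range] at hj
      congr 1
      omega
    rw [refl1, Finset.sum_congr rfl hpt]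
    have hsum : ∑ j ∈ Finset.range (m + 1), g (j + 1) = ∑ j ∈ Finset.range (m + 2), g j := by
      rw [Finset.sum_range_succ' g (m + 1), hg0 0 hk, add_zero]
    rw [hsum]
    have hsplit : ∑ j ∈ Finset.range (m + 2), g j
        = p + c * (((m : ℝ) + 2) * ((m : ℝ) + 1) / 2 - ((k : ℝ) + 1) * (k : ℝ) / 2) := by
      rw [Finset.range_eq_Ico,
        ← Finset.sum_Ico_consecutive g (Nat.zero_le (k + 1)) (by omega : k + 1 ≤ m + 2)]
      have hz : ∑ j ∈ Finset.range k, g j = 0 :=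
        Finset.sum_eq_zero fun j hj => hg0 j (Finset.mem_range.mp hj)
      have h1 : ∑ j ∈ Finset.Ico 0 (k + 1), g j = p := by
        rw [← Finset.range_eq_Ico, Finset.sum_range_succ, hz, zero_add]
        simp [hg]
      have h2 : ∑ j ∈ Finset.Ico (k + 1) (m + 2), g j
          = c * (((m : ℝ) + 2) * ((m : ℝ) + 1) / 2 - ((k : ℝ) + 1) * (k : ℝ) / 2) := by
        have he : ∀ j ∈ Finset.Ico (k + 1) (m + 2), g j = c * (j : ℝ) := by
          intro j hj
          rw [Finset.mem_Ico] at hj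
          simp only [hg]
          rw [if_neg (by omega), if_pos (by omega)]
        rw [Finset.sum_congr rfl he, ← Finset.mul_sum]
        congr 1
        rw [Finset.sum_Ico_eq_sub _ (by omega : k + 1 ≤ m + 2), gauss, gauss]
        push_cast
        ring
      rw [h1, h2]
    rw [hsplit, hc]
    have hm1 : (m : ℝ) + 1 ≠ 0 := by positivity
    push_cast
    field_simp
    ring
end BT

open BT in
/-- For positive integers `1 ≤ k < n` and any `S_k ⊆ T_k` with
`p_k = Σ_{t ∈ S_k} P_bst(t)`, the expected number of fringe subtrees belonging to `S_k`
in a random binary search tree with `n` leaves equals `2·p_k·n/(k·(k+1))`. -/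
theorem expected_fringe_occurrences_bst
    (n k : ℕ) (hk : 0 < k) (hkn : k < n) (S : Finset BT) (hS : S ⊆ treesOfSize k) :
    bstE n (fun t => (Multiset.countP (· ∈ S) (fringe t) : ℝ))
      = 2 * (∑ t ∈ S, pbst t) * (n : ℝ) / ((k : ℝ) * ((k : ℝ) + 1)) := by
  exact bstCount_formula S k hk hS n hkn
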